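/- There exists a real number γ such that (a − b·γ)·h_xx + (b − c·γ)·h_xy > 0 if and only if (b·h_xx + c·h_xy ≠ 0 or h_xx > 0). -/

import Mathlib

theorem stabilizability_iff (a b c hxx hxy : ℝ)
    (ha : 0 < a) (hc : 0 < c) (hdet : 0 < a * c - b ^ 2) :
    (∃ γ : ℝ, (a - b * γ) * hxx + (b - c * γ) * hxy > 0) ↔
      (b * hxx + c * hxy ≠ 0 ∨ hxx > 0) := by
  constructor
  · rintro ⟨γ, hγ⟩
    by_cases hk : b * hxx + c * hxy = 0
    · right
      have hxyv : hxy = -(b * hxx) / c := by field_simp; linarith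
      subst hxyv
      have h2 : (a * c - b ^ 2) * hxx / c > 0 := by
        have : (a - b * γ) * hxx + (b - c * γ) * (-(b * hxx) / c)
            = (a * c - b ^ 2) * hxx / c := by field_simp; ring
        linarith [this ▸ hγ]
      have h3 : (a * c - b ^ 2) * hxx = ((a * c - b ^ 2) * hxx / c) * c := by
        field_simp
      nlinarith [mul_pos h2 hc, hdet]
    · left; exact hk
  · rintro (hk | hx)
    · refine ⟨(a * hxx + b * hxy - 1) / (b * hxx + c * hxy), ?_⟩
      have : (a - b * ((a * hxx + b * hxy - 1) / (b * hxx + c * hxy))) * hxx +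
          (b - c * ((a * hxx + b * hxy - 1) / (b * hxx + c * hxy))) * hxy = 1 := by
        have hk' : b * hxx + hxy * c ≠ 0 := by rwa [mul_comm hxy c]
        field_simp; ring
      linarith
    · by_cases hk : b * hxx + c * hxy = 0
      · refine ⟨0, ?_⟩
        have hxyv : hxy = -(b * hxx) / c := by field_simp; linarith
        subst hxyv
        have : (a - b * 0) * hxx + (b - c * 0) * (-(b * hxx) / c)
            = (a * c - b ^ 2) * hxx / c := by field_simp; ring
        rw [this]; positivity
      · refine ⟨(a * hxx + b * hxy - 1) / (b * hxx + c * hxy), ?_⟩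
        have : (a - b * ((a * hxx + b * hxy - 1) / (b * hxx + c * hxy))) * hxx +
            (b - c * ((a * hxx + b * hxy - 1) / (b * hxx + c * hxy))) * hxy = 1 := by
          have hk' : b * hxx + hxy * c ≠ 0 := by rwa [mul_comm hxy c]
          field_simp; ring
        linarith
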